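/- Let 1 ≤ p < ∞ and let Ω₀ ⊂ ℤ² be such that Ω₀^c = {0}×ℤ₀. Then for every function M ∈ L^p(𝕋²), the system {M(x,y)e^{ikx}e^{imy} : (k,m) ∈ Ω₀} is not both complete and minimal in L^p(𝕋²). -/

import Mathlib

open MeasureTheory Complex Real ComplexConjugate
open scoped ENNReal NNReal

noncomputable section

instance : Fact (0 < 2 * Real.pi) := ⟨by positivity⟩

/-- The circle `𝕋 = ℝ/2πℤ`, equipped with Lebesgue measure (total measure `2π`). -/
abbrev 𝕋 : Type := AddCircle (2 * Real.pi)

/-- The exponential `e k x = exp (i k x)` on `𝕋`. -/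
noncomputable def e (k : ℤ) (x : 𝕋) : ℂ := fourier k x

/-- A system of functions is complete in `L^p` if the closed linear span (inside `L^p`)
of its members equals the whole space. -/
def IsCompleteSystem {α : Type*} [MeasureSpace α] (p : ℝ≥0∞) [Fact (1 ≤ p)] {ι : Type*}
    (f : ι → α → ℂ) : Prop :=
  (Submodule.span ℂ {h : Lp ℂ p (volume : Measure α) |
      ∃ i : ι, (h : α → ℂ) =ᵐ[volume] f i}).topologicalClosure = ⊤

/-- A system of functions is minimal in `L^p` if no element belongs to the closed
linear span of the remaining elements. -/
def IsMinimalSystem {α : Type*} [MeasureSpace α] (p : ℝ≥0∞) [Fact (1 ≤ p)] {ι : Type*}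
    (f : ι → α → ℂ) : Prop :=
  ∀ i : ι, ∀ g : Lp ℂ p (volume : Measure α), (g : α → ℂ) =ᵐ[volume] f i →
    g ∉ (Submodule.span ℂ {h : Lp ℂ p (volume : Measure α) |
      ∃ j : ι, j ≠ i ∧ (h : α → ℂ) =ᵐ[volume] f j}).topologicalClosure

namespace Aux14

lemma norm_e (k : ℤ) (x : 𝕋) : ‖e k x‖ = 1 := by
  simp [e, fourier_apply, Circle.norm_coe]

lemma continuous_e (k : ℤ) : Continuous (e k) := (fourier k).continuous

abbrev Lp2 (p : ℝ≥0∞) : Type := Lp ℂ p (volume : Measure (𝕋 × 𝕋))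

variable (p : ℝ≥0∞)

lemma memℒp_mul {F : 𝕋 × 𝕋 → ℂ} (hF : MemLp F p volume) {u : 𝕋 × 𝕋 → ℂ}
    (hu : AEStronglyMeasurable u (volume : Measure (𝕋 × 𝕋))) {c : ℝ}
    (hub : ∀ z, ‖u z‖ ≤ c) : MemLp (fun z => F z * u z) p volume :=
  hF.of_le_mul (hF.aestronglyMeasurable.mul hu)
    (Filter.Eventually.of_forall fun z => by
      rw [norm_mul, mul_comm]
      exact mul_le_mul_of_nonneg_right (hub z) (norm_nonneg _))

lemma eLpNorm_mul_le (F u : 𝕋 × 𝕋 → ℂ) {c : ℝ} (hc : 0 ≤ c) (hub : ∀ z, ‖u z‖ ≤ c) :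
    eLpNorm (fun z => F z * u z) p volume ≤ ENNReal.ofReal c * eLpNorm F p volume := by
  calc eLpNorm (fun z => F z * u z) p volume
      ≤ eLpNorm (fun z => (c : ℂ) • F z) p volume := by
        apply eLpNorm_mono_ae (Filter.Eventually.of_forall fun z => ?_)
        rw [norm_mul, norm_smul, Complex.norm_real, Real.norm_eq_abs,
          _root_.abs_of_nonneg hc, mul_comm ‖F z‖]
        exact mul_le_mul_of_nonneg_right (hub z) (norm_nonneg _)
    _ = (‖(c : ℂ)‖₊ : ℝ≥0∞) * eLpNorm F p volume := by
        exact eLpNorm_const_smul (c : ℂ) F p volume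
    _ = ENNReal.ofReal c * eLpNorm F p volume := by
        rw [Complex.nnnorm_real, ← Real.enorm_eq_ofReal hc]; rfl

variable [Fact (1 ≤ p)]

/-- Multiplication by a continuous function of norm at most 1, as a continuous linear map
on `L^p(𝕋²)`. -/
def mulCLM {u : 𝕋 × 𝕋 → ℂ} (hu : Continuous u) (hub : ∀ z, ‖u z‖ ≤ 1) :
    Lp2 p →L[ℂ] Lp2 p := by
  refine LinearMap.mkContinuous
    { toFun := fun f => MemLp.toLp (fun z => f z * u z)
        (memℒp_mul p (Lp.memLp f) hu.aestronglyMeasurable hub)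
      map_add' := fun f g => ?_
      map_smul' := fun a f => ?_ } 1 (fun f => ?_)
  · apply Lp.ext
    have hf := MemLp.coeFn_toLp (memℒp_mul p (Lp.memLp f) hu.aestronglyMeasurable hub)
    have hg := MemLp.coeFn_toLp (memℒp_mul p (Lp.memLp g) hu.aestronglyMeasurable hub)
    have hfg := MemLp.coeFn_toLp (memℒp_mul p (Lp.memLp (f + g)) hu.aestronglyMeasurable hub)
    filter_upwards [hf, hg, hfg, Lp.coeFn_add f g,
      Lp.coeFn_add (MemLp.toLp _ (memℒp_mul p (Lp.memLp f) hu.aestronglyMeasurable hub))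
        (MemLp.toLp _ (memℒp_mul p (Lp.memLp g) hu.aestronglyMeasurable hub))]
      with z h1 h2 h3 h4 h5
    rw [h3, h5]
    simp only [Pi.add_apply, h1, h2, h4, add_mul]
  · apply Lp.ext
    have hf := MemLp.coeFn_toLp (memℒp_mul p (Lp.memLp f) hu.aestronglyMeasurable hub)
    have haf := MemLp.coeFn_toLp (memℒp_mul p (Lp.memLp (a • f)) hu.aestronglyMeasurable hub)
    filter_upwards [hf, haf, Lp.coeFn_smul a f,
      Lp.coeFn_smul a (MemLp.toLp _ (memℒp_mul p (Lp.memLp f) hu.aestronglyMeasurable hub))]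
      with z h1 h2 h3 h4
    simp only [RingHom.id_apply] at *
    rw [h2, h4]
    simp only [Pi.smul_apply, h3, h1, smul_eq_mul]
    ring
  · show ‖MemLp.toLp (fun z => f z * u z)
        (memℒp_mul p (Lp.memLp f) hu.aestronglyMeasurable hub)‖ ≤ 1 * ‖f‖
    rw [one_mul, Lp.norm_toLp _ (memℒp_mul p (Lp.memLp f) hu.aestronglyMeasurable hub),
      Lp.norm_def]
    apply ENNReal.toReal_mono (Lp.eLpNorm_ne_top f)
    simpa using eLpNorm_mul_le p (⇑f) u zero_le_one hub

lemma mulCLM_coeFn {u : 𝕋 × 𝕋 → ℂ} (hu : Continuous u) (hub : ∀ z, ‖u z‖ ≤ 1) (f : Lp2 p) :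
    (mulCLM p hu hub f : 𝕋 × 𝕋 → ℂ) =ᵐ[volume] fun z => f z * u z := by
  have h : mulCLM p hu hub f = MemLp.toLp (fun z => f z * u z)
      (memℒp_mul p (Lp.memLp f) hu.aestronglyMeasurable hub) := rfl
  rw [h]
  exact MemLp.coeFn_toLp _

/-- `u ↦ G·(u ∘ snd)` as a continuous linear map `C(𝕋, ℂ) → L^p(𝕋²)`. -/
def contMulCLM {G : 𝕋 × 𝕋 → ℂ} (hG : MemLp G p volume) : C(𝕋, ℂ) →L[ℂ] Lp2 p := by
  have mem : ∀ u : C(𝕋, ℂ), MemLp (fun z => G z * u z.2) p volume := fun u =>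
    memℒp_mul p hG ((map_continuous u).comp continuous_snd).aestronglyMeasurable
      (fun z => u.norm_coe_le_norm z.2)
  refine LinearMap.mkContinuous
    { toFun := fun u => MemLp.toLp (fun z => G z * u z.2) (mem u)
      map_add' := fun u v => ?_
      map_smul' := fun a u => ?_ } ((eLpNorm G p volume).toReal) (fun u => ?_)
  · apply Lp.ext
    filter_upwards [MemLp.coeFn_toLp (mem u), MemLp.coeFn_toLp (mem v),
      MemLp.coeFn_toLp (mem (u + v)), Lp.coeFn_add (MemLp.toLp _ (mem u))
        (MemLp.toLp _ (mem v))] with z h1 h2 h3 h4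
    rw [h3, h4]
    simp only [Pi.add_apply, h1, h2, ContinuousMap.add_apply, mul_add]
  · apply Lp.ext
    filter_upwards [MemLp.coeFn_toLp (mem u), MemLp.coeFn_toLp (mem (a • u)),
      Lp.coeFn_smul a (MemLp.toLp _ (mem u))] with z h1 h2 h3
    simp only [RingHom.id_apply] at *
    rw [h2, h3]
    simp only [Pi.smul_apply, h1, ContinuousMap.smul_apply, smul_eq_mul]
    ring
  · show ‖MemLp.toLp (fun z => G z * u z.2) (mem u)‖ ≤ (eLpNorm G p volume).toReal * ‖u‖
    rw [Lp.norm_toLp _ (mem u)]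
    have hb := eLpNorm_mul_le p G (fun z => u z.2) (norm_nonneg u)
      (fun z => u.norm_coe_le_norm z.2)
    have := ENNReal.toReal_mono (by
      exact ENNReal.mul_ne_top ENNReal.ofReal_ne_top hG.eLpNorm_ne_top) hb
    rw [ENNReal.toReal_mul, ENNReal.toReal_ofReal (norm_nonneg u)] at this
    calc _ ≤ ‖u‖ * (eLpNorm G p volume).toReal := this
      _ = (eLpNorm G p volume).toReal * ‖u‖ := mul_comm _ _

lemma contMulCLM_coeFn {G : 𝕋 × 𝕋 → ℂ} (hG : MemLp G p volume) (u : C(𝕋, ℂ)) :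
    (contMulCLM p hG u : 𝕋 × 𝕋 → ℂ) =ᵐ[volume] fun z => G z * u z.2 := by
  have h : contMulCLM p hG u = MemLp.toLp (fun z => G z * u z.2)
      (memℒp_mul p hG ((map_continuous u).comp continuous_snd).aestronglyMeasurable
        (fun z => u.norm_coe_le_norm z.2)) := rfl
  rw [h]
  exact MemLp.coeFn_toLp _

/-- Dominated convergence in `L^p`. -/
lemma tendsto_eLpNorm_zero (hp0 : p ≠ 0) (hpt : p ≠ ∞) {F : ℕ → 𝕋 × 𝕋 → ℂ}
    {B : 𝕋 × 𝕋 → ℂ} (hB : MemLp B p volume)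
    (hF : ∀ n, AEStronglyMeasurable (F n) (volume : Measure (𝕋 × 𝕋)))
    (hbd : ∀ n, ∀ᵐ z ∂(volume : Measure (𝕋 × 𝕋)), ‖F n z‖ ≤ ‖B z‖)
    (hlim : ∀ᵐ z ∂(volume : Measure (𝕋 × 𝕋)),
      Filter.Tendsto (fun n => F n z) Filter.atTop (nhds 0)) :
    Filter.Tendsto (fun n => eLpNorm (F n) p volume) Filter.atTop (nhds 0) := by
  have hq : 0 < p.toReal := ENNReal.toReal_pos hp0 hpt
  suffices h : Filter.Tendsto (fun n => ∫⁻ z, (‖F n z‖₊ : ℝ≥0∞) ^ p.toReal ∂volume)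
      Filter.atTop (nhds 0) by
    simp only [eLpNorm_eq_lintegral_rpow_enorm_toReal hp0 hpt]
    have h2 := (ENNReal.continuous_rpow_const
      (y := 1 / p.toReal)).continuousAt.tendsto.comp h
    rwa [ENNReal.zero_rpow_of_pos (by positivity : (0:ℝ) < 1 / p.toReal)] at h2
  have hFm : ∀ n, AEMeasurable (fun z => (‖F n z‖₊ : ℝ≥0∞) ^ p.toReal)
      (volume : Measure (𝕋 × 𝕋)) := fun n =>
    (ENNReal.continuous_rpow_const.measurable).comp_aemeasurable (hF n).enorm
  have h_bound : ∀ n, (fun z => (‖F n z‖₊ : ℝ≥0∞) ^ p.toReal)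
      ≤ᵐ[(volume : Measure (𝕋 × 𝕋))] fun z => (‖B z‖₊ : ℝ≥0∞) ^ p.toReal := fun n =>
    (hbd n).mono fun z hz => ENNReal.rpow_le_rpow (by exact_mod_cast hz) hq.le
  have h_fin : (∫⁻ z, (‖B z‖₊ : ℝ≥0∞) ^ p.toReal ∂(volume : Measure (𝕋 × 𝕋))) ≠ ∞ :=
    (lintegral_rpow_enorm_lt_top_of_eLpNorm_lt_top hp0 hpt hB.2).ne
  have h_lim : ∀ᵐ z ∂(volume : Measure (𝕋 × 𝕋)),
      Filter.Tendsto (fun n => (‖F n z‖₊ : ℝ≥0∞) ^ p.toReal) Filter.atTop (nhds 0) := by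
    filter_upwards [hlim] with z hz
    have h1 : Filter.Tendsto (fun n => (‖F n z‖₊ : ℝ≥0∞)) Filter.atTop (nhds 0) := by
      rw [show (0 : ℝ≥0∞) = ((0 : ℝ≥0) : ℝ≥0∞) by simp]
      exact ENNReal.tendsto_coe.2 (by simpa using hz.nnnorm)
    have h2 := (ENNReal.continuous_rpow_const
      (y := p.toReal)).continuousAt.tendsto.comp h1
    rwa [ENNReal.zero_rpow_of_pos hq] at h2
  simpa using tendsto_lintegral_of_dominated_convergence' _ hFm h_bound h_fin h_lim

end Aux14


set_option maxHeartbeats 1000000 in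
set_option synthInstance.maxHeartbeats 200000 in
open Aux14 in
/-- Proposition 3.13: for `Ω₀ᶜ = {0} × ℤ₀`, the system is never both
complete and minimal in `L^p(𝕋²)`, whatever `M ∈ L^p(𝕋²)` is. -/
theorem statement14 (p : ℝ≥0∞) [hp1 : Fact (1 ≤ p)] (hp2 : p ≠ ⊤)
    (Ω₀ : Set (ℤ × ℤ)) (hΩc : Ω₀ᶜ = {(0 : ℤ)} ×ˢ {n : ℤ | n ≠ 0})
    (M : 𝕋 × 𝕋 → ℂ) (hM : MemLp M p volume) :
    ¬ (IsCompleteSystem p (fun km : Ω₀ => fun z : 𝕋 × 𝕋 =>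
      M z * e (km : ℤ × ℤ).1 z.1 * e (km : ℤ × ℤ).2 z.2) ∧
       IsMinimalSystem p (fun km : Ω₀ => fun z : 𝕋 × 𝕋 =>
      M z * e (km : ℤ × ℤ).1 z.1 * e (km : ℤ × ℤ).2 z.2)) := by
  rintro ⟨hC, hMin⟩
  set F : Ω₀ → 𝕋 × 𝕋 → ℂ := fun km => fun z : 𝕋 × 𝕋 =>
      M z * e (km : ℤ × ℤ).1 z.1 * e (km : ℤ × ℤ).2 z.2 with hFdef
  have hp0 : p ≠ 0 := (lt_of_lt_of_le zero_lt_one hp1.out).ne'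
  -- basic index facts
  have hmem_of : ∀ km : ℤ × ℤ, km.1 ≠ 0 → km ∈ Ω₀ := by
    intro km h
    by_contra hc
    have hc' : km ∈ Ω₀ᶜ := hc
    rw [hΩc] at hc'
    exact h hc'.1
  have h00 : ((0, 0) : ℤ × ℤ) ∈ Ω₀ := by
    by_contra hc
    have hc' : ((0, 0) : ℤ × ℤ) ∈ Ω₀ᶜ := hc
    rw [hΩc] at hc'
    exact hc'.2 rfl
  set i₀ : Ω₀ := ⟨(0, 0), h00⟩ with hi₀
  have hk_ne : ∀ j : Ω₀, j ≠ i₀ → (j : ℤ × ℤ).1 ≠ 0 := by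
    intro j hj hk
    apply hj
    apply Subtype.ext
    have h2 : (j : ℤ × ℤ).2 = 0 := by
      by_contra h2
      have : (j : ℤ × ℤ) ∈ Ω₀ᶜ := by rw [hΩc]; exact ⟨hk, h2⟩
      exact this j.2
    exact Prod.ext hk h2
  -- the subspace V
  set Sset : Set (Lp2 p) := {h : Lp2 p | ∃ j : Ω₀, j ≠ i₀ ∧ (h : 𝕋 × 𝕋 → ℂ) =ᵐ[volume] F j}
    with hSset
  set V : Submodule ℂ (Lp2 p) := (Submodule.span ℂ Sset).topologicalClosure with hV
  haveI hVclosed : IsClosed (V : Set (Lp2 p)) := Submodule.isClosed_topologicalClosure _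
  set MLp : Lp2 p := hM.toLp M with hMLp
  have hFi₀ : (F i₀ : 𝕋 × 𝕋 → ℂ) =ᵐ[volume] M := by
    apply Filter.Eventually.of_forall
    intro z
    simp [hFdef, hi₀, e, fourier_zero]
  have hMnotV : MLp ∉ V := hMin i₀ MLp (hM.coeFn_toLp.trans hFi₀.symm)
  -- the multiplication operators T m and invariance of V
  have hube : ∀ (m : ℤ), ∀ z : 𝕋 × 𝕋, ‖e m z.2‖ ≤ 1 := fun m z => le_of_eq (norm_e m z.2)
  have hconte : ∀ m : ℤ, Continuous fun z : 𝕋 × 𝕋 => e m z.2 :=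
    fun m => (continuous_e m).comp continuous_snd
  set T : ℤ → (Lp2 p →L[ℂ] Lp2 p) := fun m => mulCLM p (hconte m) (hube m) with hT
  have hTV : ∀ (m : ℤ), ∀ x ∈ V, T m x ∈ V := by
    intro m
    have hgen : ∀ h ∈ Sset, T m h ∈ V := by
      intro h hh
      obtain ⟨j, hj, hae⟩ := hh
      have hk := hk_ne j hj
      set j' : Ω₀ := ⟨((j : ℤ × ℤ).1, (j : ℤ × ℤ).2 + m), hmem_of _ hk⟩ with hj'def
      have hj'ne : j' ≠ i₀ := by
        intro hcon
        apply hk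
        have := congrArg (fun t : Ω₀ => (t : ℤ × ℤ).1) hcon
        exact this
      have haeT : (T m h : 𝕋 × 𝕋 → ℂ) =ᵐ[volume] F j' := by
        refine (mulCLM_coeFn p (hconte m) (hube m) h).trans ?_
        filter_upwards [hae] with z hz
        rw [hz]
        simp only [hFdef, hj'def]
        show M z * e (j : ℤ × ℤ).1 z.1 * e (j : ℤ × ℤ).2 z.2 * e m z.2
          = M z * e (j : ℤ × ℤ).1 z.1 * e ((j : ℤ × ℤ).2 + m) z.2
        rw [show e ((j : ℤ × ℤ).2 + m) z.2 = e (j : ℤ × ℤ).2 z.2 * e m z.2 from by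
          simp [e, ← fourier_add]]
        ring
      exact Submodule.le_topologicalClosure _ (Submodule.subset_span ⟨j', hj'ne, haeT⟩)
    intro x hx
    have hcomap : (Submodule.span ℂ Sset).topologicalClosure ≤
        V.comap (T m : Lp2 p →ₗ[ℂ] Lp2 p) := by
      apply Submodule.topologicalClosure_minimal
      · rw [Submodule.span_le]
        intro h hh
        exact hgen h hh
      · have : ((V.comap (T m : Lp2 p →ₗ[ℂ] Lp2 p)) : Set (Lp2 p))
            = (T m) ⁻¹' (V : Set (Lp2 p)) := rfl
        rw [this]
        exact hVclosed.preimage (T m).continuous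
    exact hcomap hx
  -- completeness: V ⊔ ℂ∙MLp is dense
  have hSall : {h : Lp2 p | ∃ i : Ω₀, (h : 𝕋 × 𝕋 → ℂ) =ᵐ[volume] F i}
      ⊆ ((V ⊔ (ℂ ∙ MLp) : Submodule ℂ (Lp2 p)) : Set (Lp2 p)) := by
    intro h hh
    obtain ⟨i, hae⟩ := hh
    by_cases hi : i = i₀
    · subst hi
      have : h = MLp := Lp.ext (hae.trans (hFi₀.trans hM.coeFn_toLp.symm))
      rw [this]
      exact Submodule.mem_sup_right (Submodule.mem_span_singleton_self _)
    · exact Submodule.mem_sup_left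
        (Submodule.le_topologicalClosure _ (Submodule.subset_span ⟨i, hi, hae⟩))
  -- quotient argument: N = M·e¹(y) decomposes as v + c • MLp
  set N : Lp2 p := MemLp.toLp (fun z => M z * e 1 z.2)
    (memℒp_mul p hM (hconte 1).aestronglyMeasurable (hube 1)) with hN
  have hNmem : N ∈ ((V ⊔ (ℂ ∙ MLp) : Submodule ℂ (Lp2 p))).topologicalClosure := by
    have h1 : (Submodule.span ℂ {h : Lp2 p | ∃ i : Ω₀, (h : 𝕋 × 𝕋 → ℂ) =ᵐ[volume] F i})
        ≤ (V ⊔ (ℂ ∙ MLp) : Submodule ℂ (Lp2 p)) := Submodule.span_le.2 hSall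
    have h2 := Submodule.topologicalClosure_mono h1
    rw [hC] at h2
    exact h2 (Submodule.mem_top)
  obtain ⟨c, hcdecomp⟩ : ∃ c : ℂ, N - c • MLp ∈ V := by
    have hcont : Continuous fun x : Lp2 p => V.mkQ x :=
      AddMonoidHomClass.continuous_of_bound V.mkQ 1 (fun x => by
        rw [one_mul]; exact Submodule.Quotient.norm_mk_le _ _)
    have himg : V.mkQ '' ((V ⊔ (ℂ ∙ MLp) : Submodule ℂ (Lp2 p)) : Set (Lp2 p))
        ⊆ ((ℂ ∙ (V.mkQ MLp) : Submodule ℂ (Lp2 p ⧸ V)) : Set (Lp2 p ⧸ V)) := by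
      rintro _ ⟨x, hx, rfl⟩
      obtain ⟨v, hv, w, hw, rfl⟩ := Submodule.mem_sup.1 hx
      obtain ⟨a, rfl⟩ := Submodule.mem_span_singleton.1 hw
      rw [map_add, _root_.map_smul]
      have hv0 : V.mkQ v = 0 := by
        rw [Submodule.mkQ_apply, Submodule.Quotient.mk_eq_zero]
        exact hv
      rw [hv0, zero_add]
      exact Submodule.mem_span_singleton.2 ⟨a, rfl⟩
    haveI hqn : NormedAddCommGroup (Lp2 p ⧸ V) := Submodule.Quotient.normedAddCommGroup V
    haveI ht2 : T2Space (Lp2 p ⧸ V) := inferInstance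
    have hclosedspan : IsClosed ((ℂ ∙ (V.mkQ MLp) : Submodule ℂ (Lp2 p ⧸ V))
        : Set (Lp2 p ⧸ V)) := Submodule.closed_of_finiteDimensional _
    have hmkN : V.mkQ N ∈ (ℂ ∙ (V.mkQ MLp) : Submodule ℂ (Lp2 p ⧸ V)) := by
      have h3 : N ∈ closure ((V ⊔ (ℂ ∙ MLp) : Submodule ℂ (Lp2 p)) : Set (Lp2 p)) := hNmem
      have h4 : V.mkQ N ∈ closure (V.mkQ ''
          ((V ⊔ (ℂ ∙ MLp) : Submodule ℂ (Lp2 p)) : Set (Lp2 p))) := by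
        apply image_closure_subset_closure_image hcont
        exact Set.mem_image_of_mem _ h3
      have h5 := closure_mono himg
      rw [hclosedspan.closure_eq] at h5
      exact h5 h4
    obtain ⟨a, ha⟩ := Submodule.mem_span_singleton.1 hmkN
    refine ⟨a, ?_⟩
    have h6 : V.mkQ (a • MLp) = V.mkQ N := by rw [_root_.map_smul, ha]
    have h7 : (Submodule.Quotient.mk N : Lp2 p ⧸ V) = Submodule.Quotient.mk (a • MLp) := by
      rw [← Submodule.mkQ_apply, ← Submodule.mkQ_apply, h6]
    exact (Submodule.Quotient.eq V).1 h7
  -- Mg = M·(e¹(y) - c) lies in V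
  set g : 𝕋 → ℂ := fun y => e 1 y - c with hg
  have hgcont : Continuous g := (continuous_e 1).sub continuous_const
  have hgb : ∀ z : 𝕋 × 𝕋, ‖g z.2‖ ≤ 1 + ‖c‖ := fun z => by
    refine (norm_sub_le _ _).trans ?_
    rw [norm_e]
  set Mg : 𝕋 × 𝕋 → ℂ := fun z => M z * g z.2 with hMgdef
  have hMg : MemLp Mg p volume :=
    memℒp_mul p hM (hgcont.comp continuous_snd).aestronglyMeasurable hgb
  have hMgV : hMg.toLp Mg ∈ V := by
    have heq : hMg.toLp Mg = N - c • MLp := by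
      apply Lp.ext
      filter_upwards [hMg.coeFn_toLp, Lp.coeFn_sub N (c • MLp), Lp.coeFn_smul c MLp,
        MemLp.coeFn_toLp (memℒp_mul p hM (hconte 1).aestronglyMeasurable (hube 1)),
        hM.coeFn_toLp] with z h1 h2 h3 h4 h5
      rw [h1, h2, Pi.sub_apply, h3, Pi.smul_apply, h4, h5, smul_eq_mul]
      simp only [hMgdef, hg]
      ring
    rw [heq]
    exact hcdecomp
  -- Mg · u(y) ∈ V for every continuous u
  set Φ : C(𝕋, ℂ) →L[ℂ] Lp2 p := contMulCLM p hMg with hΦ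
  have hΦfour : ∀ m : ℤ, Φ (fourier m) ∈ V := by
    intro m
    have heq : Φ (fourier m) = T m (hMg.toLp Mg) := by
      apply Lp.ext
      refine (contMulCLM_coeFn p hMg (fourier m)).trans ?_
      refine Filter.EventuallyEq.symm ?_
      refine (mulCLM_coeFn p (hconte m) (hube m) _).trans ?_
      filter_upwards [hMg.coeFn_toLp] with z h1
      rw [h1]
      rfl
    rw [heq]
    exact hTV m _ hMgV
  have hΦall : ∀ u : C(𝕋, ℂ), Φ u ∈ V := by
    have hcomap : (⊤ : Submodule ℂ C(𝕋, ℂ)) ≤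
        V.comap (Φ : C(𝕋, ℂ) →ₗ[ℂ] Lp2 p) := by
      rw [← span_fourier_closure_eq_top]
      apply Submodule.topologicalClosure_minimal
      · rw [Submodule.span_le]
        rintro _ ⟨m, rfl⟩
        exact hΦfour m
      · have : ((V.comap (Φ : C(𝕋, ℂ) →ₗ[ℂ] Lp2 p)) : Set C(𝕋, ℂ))
            = Φ ⁻¹' (V : Set (Lp2 p)) := rfl
        rw [this]
        exact hVclosed.preimage Φ.continuous
    intro u
    exact hcomap Submodule.mem_top
  -- the approximating sequence
  have hden : ∀ (n : ℕ) (y : 𝕋), Complex.normSq (g y) + ((n : ℝ) + 1)⁻¹ ≠ 0 := by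
    intro n y
    have h1 : (0 : ℝ) < ((n : ℝ) + 1)⁻¹ := by positivity
    have := Complex.normSq_nonneg (g y)
    linarith
  set un : ℕ → C(𝕋, ℂ) := fun n =>
    ⟨fun y => (starRingEnd ℂ) (g y) *
        (((Complex.normSq (g y) + ((n : ℝ) + 1)⁻¹ : ℝ) : ℂ))⁻¹, by
      apply Continuous.mul
      · exact Complex.continuous_conj.comp hgcont
      · apply Continuous.inv₀
        · exact Complex.continuous_ofReal.comp
            ((Complex.continuous_normSq.comp hgcont).add continuous_const)
        · intro y
          exact Complex.ofReal_ne_zero.2 (hden n y)⟩ with hun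
  set s : ℕ → 𝕋 → ℝ := fun n y =>
    Complex.normSq (g y) * (Complex.normSq (g y) + ((n : ℝ) + 1)⁻¹)⁻¹ with hs
  have hunval : ∀ (n : ℕ) (z : 𝕋 × 𝕋), Mg z * (un n) z.2 = M z * ((s n z.2 : ℝ) : ℂ) := by
    intro n z
    show M z * g z.2 * ((starRingEnd ℂ) (g z.2) *
        (((Complex.normSq (g z.2) + ((n : ℝ) + 1)⁻¹ : ℝ) : ℂ))⁻¹) = _
    have key : g z.2 * (starRingEnd ℂ) (g z.2) = ((Complex.normSq (g z.2) : ℝ) : ℂ) :=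
      Complex.mul_conj _
    rw [hs]
    push_cast
    linear_combination (M z * (((Complex.normSq (g z.2) : ℂ) + ((n : ℂ) + 1)⁻¹)⁻¹)) * key
  have hs01 : ∀ (n : ℕ) (y : 𝕋), 0 ≤ s n y ∧ s n y ≤ 1 := by
    intro n y
    have h1 : (0 : ℝ) < ((n : ℝ) + 1)⁻¹ := by positivity
    have h2 := Complex.normSq_nonneg (g y)
    have h3 : 0 < Complex.normSq (g y) + ((n : ℝ) + 1)⁻¹ := by linarith
    constructor
    · exact mul_nonneg h2 (inv_nonneg.2 h3.le)
    · show Complex.normSq (g y) * (Complex.normSq (g y) + ((n : ℝ) + 1)⁻¹)⁻¹ ≤ 1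
      rw [← div_eq_mul_inv, div_le_one h3]
      linarith
  -- L^p convergence of Mg·un → M
  have hFn_mem : ∀ n : ℕ, MemLp (fun z => Mg z * (un n) z.2) p volume := fun n =>
    memℒp_mul p hMg (((map_continuous (un n)).comp continuous_snd).aestronglyMeasurable)
      (fun z => (un n).norm_coe_le_norm z.2)
  have hT2 : Filter.Tendsto (fun n => eLpNorm ((fun z => Mg z * (un n) z.2) - M) p volume)
      Filter.atTop (nhds 0) := by
    apply tendsto_eLpNorm_zero p hp0 hp2 (B := M) hM
    · intro n
      exact ((hFn_mem n).aestronglyMeasurable).sub hM.aestronglyMeasurable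
    · intro n
      apply  Filter.Eventually.of_forall
      intro z
      rw [Pi.sub_apply, hunval n z]
      rw [show M z * ((s n z.2 : ℝ) : ℂ) - M z = M z * (((s n z.2 - 1 : ℝ) : ℂ)) from by
        push_cast; ring]
      rw [norm_mul, Complex.norm_real, Real.norm_eq_abs]
      have := hs01 n z.2
      have habs : |s n z.2 - 1| ≤ 1 := by
        rw [abs_le]; constructor <;> linarith [this.1, this.2]
      calc ‖M z‖ * |s n z.2 - 1| ≤ ‖M z‖ * 1 :=
            mul_le_mul_of_nonneg_left habs (norm_nonneg _)
        _ = ‖M z‖ := mul_one _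
    · -- a.e. convergence
      have hnull : (volume : Measure (𝕋 × 𝕋)) {z : 𝕋 × 𝕋 | g z.2 = 0} = 0 := by
        have hsub : {z : 𝕋 × 𝕋 | g z.2 = 0} = Set.univ ×ˢ {y : 𝕋 | g y = 0} := by
          ext z; simp [Set.mem_prod]
        rw [hsub, MeasureTheory.Measure.volume_eq_prod, MeasureTheory.Measure.prod_prod]
        have hzero : (volume : Measure 𝕋) {y : 𝕋 | g y = 0} = 0 := by
          have hss : Set.Subsingleton {y : 𝕋 | g y = 0} := by
            intro y1 h1 y2 h2
            have e1 : (AddCircle.toCircle y1 : ℂ) = c := by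
              have := h1; rw [hg] at this
              simpa [e, fourier_one, sub_eq_zero] using this
            have e2 : (AddCircle.toCircle y2 : ℂ) = c := by
              have := h2; rw [hg] at this
              simpa [e, fourier_one, sub_eq_zero] using this
            have : AddCircle.toCircle y1 = AddCircle.toCircle y2 := by
              apply Subtype.ext (α := ℂ)
              rw [e1, e2]
            exact AddCircle.injective_toCircle (by positivity : (0:ℝ) < 2 * Real.pi).ne' this
          rcases hss.eq_empty_or_singleton with h | ⟨y₀, h⟩
          · rw [h]; simp
          · rw [h]
            have h1 : ({y₀} : Set 𝕋) = Metric.closedBall y₀ 0 := by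
              rw [Metric.closedBall_zero]
            rw [h1, AddCircle.volume_closedBall, mul_zero,
              min_eq_right (by positivity : (0:ℝ) ≤ 2 * Real.pi), ENNReal.ofReal_zero]
        rw [hzero, mul_zero]
      have hae : ∀ᵐ z ∂(volume : Measure (𝕋 × 𝕋)), g z.2 ≠ 0 := by
        rw [MeasureTheory.ae_iff]
        simpa using hnull
      filter_upwards [hae] with z hz
      have ha : 0 < Complex.normSq (g z.2) := Complex.normSq_pos.2 hz
      have hεlim : Filter.Tendsto (fun n : ℕ => ((n : ℝ) + 1)⁻¹) Filter.atTop (nhds 0) := by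
        simpa [one_div] using tendsto_one_div_add_atTop_nhds_zero_nat (𝕜 := ℝ)
      have hslim : Filter.Tendsto (fun n => s n z.2) Filter.atTop (nhds 1) := by
        have hd : Filter.Tendsto (fun n : ℕ => Complex.normSq (g z.2) + ((n : ℝ) + 1)⁻¹)
            Filter.atTop (nhds (Complex.normSq (g z.2))) := by
          simpa using (tendsto_const_nhds (x := Complex.normSq (g z.2))).add hεlim
        have hinv := hd.inv₀ ha.ne'
        have := (tendsto_const_nhds (x := Complex.normSq (g z.2))).mul hinv
        rwa [mul_inv_cancel₀ ha.ne'] at this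
      have hC : Filter.Tendsto (fun n => ((s n z.2 : ℝ) : ℂ)) Filter.atTop (nhds 1) := by
        have := (Complex.continuous_ofReal.tendsto 1).comp hslim
        exact this
      have : Filter.Tendsto (fun n => M z * (((s n z.2 : ℝ) : ℂ) - 1)) Filter.atTop
          (nhds (M z * (1 - 1))) :=
        tendsto_const_nhds.mul (hC.sub tendsto_const_nhds)
      simp only [sub_self, mul_zero] at this
      apply this.congr
      intro n
      rw [Pi.sub_apply, hunval n z]
      push_cast
      ring
  -- conclude M ∈ V, contradiction
  have htoLp : Filter.Tendsto (fun n => Φ (un n)) Filter.atTop (nhds MLp) := by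
    have h1 := (Lp.tendsto_Lp_iff_tendsto_eLpNorm'' (fun n => fun z => Mg z * (un n) z.2)
      hFn_mem M hM).2 hT2
    have h2 : ∀ n, (hFn_mem n).toLp (fun z => Mg z * (un n) z.2) = Φ (un n) := by
      intro n
      apply Lp.ext
      exact (MemLp.coeFn_toLp _).trans (contMulCLM_coeFn p hMg (un n)).symm
    rw [hMLp]
    exact Filter.Tendsto.congr (fun n => h2 n) h1
  have hMV : MLp ∈ V := hVclosed.mem_of_tendsto htoLp
    (Filter.Eventually.of_forall (fun n => hΦall (un n)))
  exact hMnotV hMV
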